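/- No element of order 4 in G = A(n,θ) is conjugate to its inverse. -/

import Mathlib

noncomputable section

abbrev Fq (n : ℕ) : Type := GaloisField 2 n

instance (n : ℕ) : Fintype (Fq n) := Fintype.ofFinite _

@[ext] structure SuzukiA (n : ℕ) (θ : Fq n ≃+* Fq n) where
  a : Fq n
  b : Fq n

namespace SuzukiA

variable {n : ℕ} {θ : Fq n ≃+* Fq n}

instance : Mul (SuzukiA n θ) := ⟨fun x y => ⟨x.a + y.a, x.b + y.b + x.a * θ y.a⟩⟩
instance : One (SuzukiA n θ) := ⟨⟨0, 0⟩⟩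
instance : Inv (SuzukiA n θ) := ⟨fun x => ⟨x.a, x.b + x.a * θ x.a⟩⟩

theorem mul_def (x y : SuzukiA n θ) :
    x * y = ⟨x.a + y.a, x.b + y.b + x.a * θ y.a⟩ := rfl

@[simp] theorem one_a : (1 : SuzukiA n θ).a = 0 := rfl
@[simp] theorem one_b : (1 : SuzukiA n θ).b = 0 := rfl

instance : Group (SuzukiA n θ) where
  mul_assoc x y z := by ext <;> simp [mul_def, map_add] <;> ring
  one_mul x := by ext <;> simp [mul_def]
  mul_one x := by ext <;> simp [mul_def]
  inv_mul_cancel x := by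
    have h2 : (2 : Fq n) = 0 := by
      have := CharP.cast_eq_zero (Fq n) 2
      exact_mod_cast this
    show (⟨x.a, x.b + x.a * θ x.a⟩ * x : SuzukiA n θ) = 1
    ext
    · show x.a + x.a = 0
      linear_combination x.a * h2
    · show x.b + x.a * θ x.a + x.b + x.a * θ x.a = 0
      linear_combination (x.b + x.a * θ x.a) * h2

instance : Fintype (SuzukiA n θ) :=
  Fintype.ofEquiv (Fq n × Fq n)
    { toFun := fun p => ⟨p.1, p.2⟩
      invFun := fun x => (x.a, x.b)
      left_inv := fun _ => rfl
      right_inv := fun _ => rfl }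

end SuzukiA

/-- Every ring automorphism of `Fq n` has order dividing `n`. -/
theorem aux_pow_n_eq_one {n : ℕ} (hn : n ≠ 0) (σ : Fq n ≃+* Fq n) : σ ^ n = 1 := by
  have hcomm : ∀ r : ZMod 2, σ (algebraMap (ZMod 2) (Fq n) r) = algebraMap (ZMod 2) (Fq n) r := by
    intro r
    have := RingHom.ext_zmod (σ.toRingHom.comp (algebraMap (ZMod 2) (Fq n)))
      (algebraMap (ZMod 2) (Fq n))
    exact RingHom.congr_fun this r
  set σa : Fq n ≃ₐ[ZMod 2] Fq n := AlgEquiv.ofRingEquiv hcomm with hσa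
  have hcard : Fintype.card (Fq n ≃ₐ[ZMod 2] Fq n) = n := by
    rw [← Nat.card_eq_fintype_card, IsGalois.card_aut_eq_finrank, GaloisField.finrank 2 hn]
  have h1 : σa ^ n = 1 := by
    have := pow_card_eq_one (x := σa)
    rwa [hcard] at this
  have key : ∀ k : ℕ, ∀ t : Fq n, (σ ^ k) t = (σa ^ k) t := by
    intro k
    induction k with
    | zero => intro t; rfl
    | succ k ih =>
      intro t
      rw [pow_succ', pow_succ']
      show σ ((σ ^ k) t) = σa ((σa ^ k) t)
      rw [ih]
      rfl
  ext t
  have := key n t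
  rw [h1] at this
  simpa using this

open SuzukiA in
theorem stmt11 (n : ℕ) (hn : 1 < n) (hodd : Odd n) (θ : Fq n ≃+* Fq n)
    (hθ : ∀ σ : Fq n ≃+* Fq n, σ ∈ Subgroup.zpowers θ) :
    ∀ x : SuzukiA n θ, orderOf x = 4 → ¬ IsConj x x⁻¹ := by
  intro x hx hconj
  have h2 : (2 : Fq n) = 0 := by
    have := CharP.cast_eq_zero (Fq n) 2
    exact_mod_cast this
  -- x.a ≠ 0
  have hc : x.a ≠ 0 := by
    intro h0
    have hsq : x * x = 1 := by
      ext
      · show x.a + x.a = 0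
        linear_combination x.a * h2
      · show x.b + x.b + x.a * θ x.a = 0
        rw [h0]
        ring_nf
        linear_combination x.b * h2
    have : orderOf x ∣ 2 := orderOf_dvd_of_pow_eq_one (by rw [pow_two]; exact hsq)
    rw [hx] at this
    omega
  obtain ⟨g, hg⟩ := hconj
  set y : SuzukiA n θ := (g : SuzukiA n θ) with hy
  have hg' : y * x = x⁻¹ * y := hg
  have hb : y.b + x.b + y.a * θ x.a = x.b + x.a * θ x.a + y.b + x.a * θ y.a := by
    have := congrArg SuzukiA.b hg'
    exact this
  have hkey : y.a * θ x.a + x.a * θ y.a = x.a * θ x.a := by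
    linear_combination hb + x.a * θ y.a * h2
  set t : Fq n := y.a / x.a with ht
  have hθc : θ x.a ≠ 0 := by simpa using hc
  have htt : θ t = t + 1 := by
    rw [ht, map_div₀]
    field_simp
    linear_combination hkey - θ x.a * y.a * h2
  have hiter : ∀ k : ℕ, (θ ^ k) t = t + k := by
    intro k
    induction k with
    | zero => rw [pow_zero, Nat.cast_zero, add_zero]; rfl
    | succ k ih =>
      rw [pow_succ']
      show θ ((θ ^ k) t) = _
      rw [ih, map_add, map_natCast, htt]
      push_cast
      ring
  have hn1 : (θ ^ n) t = t := by
    rw [aux_pow_n_eq_one (by omega) θ]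
    rfl
  have hcast : (n : Fq n) = 0 := by
    have := hiter n
    rw [hn1] at this
    linear_combination -this
  have hdvd : (2:ℕ) ∣ n := (CharP.cast_eq_zero_iff (Fq n) 2 n).mp hcast
  obtain ⟨k, hk⟩ := hdvd
  obtain ⟨m, hm⟩ := hodd
  omega
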